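/- Let B22X, B22Y, B21X, B21Y, B12X, B12Y be real numbers with B12X > 0, and suppose that (a) (B22X − B22Y) + B12X + B21X > 0 and (b) (B22X − B22Y) + B21X − (B12Y/B12X)·B21Y > 0. Then every complex root λ of the characteristic polynomial of the real 2×2 matrix J(1,1) = [[−B12X, B12Y], [B21Y, −(B22X − B22Y) − B21X]] satisfies Re(λ) < 0. -/

import Mathlib

open Polynomial

/-- Stability of the fixation point `(1,1)` of type-x individuals: if
`(B22X − B22Y) + B12X + B21X > 0` and `(B22X − B22Y) + B21X − (B12Y/B12X)·B21Y > 0`,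
every complex root of the characteristic polynomial of the Jacobian
`J(1,1) = [[−B12X, B12Y], [B21Y, −(B22X − B22Y) − B21X]]` has negative real part. -/
theorem stmt_9 (B22X B22Y B21X B21Y B12X B12Y : ℝ) (hX : 0 < B12X)
    (ha : 0 < (B22X - B22Y) + B12X + B21X)
    (hb : 0 < (B22X - B22Y) + B21X - (B12Y / B12X) * B21Y) :
    ∀ lam : ℂ,
      (((!![-B12X, B12Y; B21Y, -(B22X - B22Y) - B21X] :
          Matrix (Fin 2) (Fin 2) ℝ).charpoly).map (algebraMap ℝ ℂ)).IsRoot lam →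
      lam.re < 0 := by
  intro lam hroot
  set M : Matrix (Fin 2) (Fin 2) ℝ := !![-B12X, B12Y; B21Y, -(B22X - B22Y) - B21X] with hM
  set t : ℝ := -B12X + (-(B22X - B22Y) - B21X) with ht
  set d : ℝ := (-B12X) * (-(B22X - B22Y) - B21X) - B12Y * B21Y with hd
  have htneg : t < 0 := by rw [ht]; linarith
  have hdpos : 0 < d := by
    rw [hd]
    have h2 : 0 < B12X * ((B22X - B22Y) + B21X - (B12Y / B12X) * B21Y) :=
      mul_pos hX hb
    have h3 : B12X * ((B22X - B22Y) + B21X - (B12Y / B12X) * B21Y)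
        = B12X * (B22X - B22Y) + B12X * B21X - B12Y * B21Y := by
      field_simp
    nlinarith [h2, h3]
  have hcp : M.charpoly = X ^ 2 - C t * X + C d := by
    rw [Matrix.charpoly, Matrix.det_fin_two]
    simp [Matrix.charmatrix_apply_eq, Matrix.charmatrix_apply_ne, hM, ht, hd]
    ring
  rw [hcp] at hroot
  have heq : lam ^ 2 - (t : ℂ) * lam + (d : ℂ) = 0 := by
    simpa [Polynomial.IsRoot, Complex.coe_algebraMap] using hroot
  set a : ℝ := lam.re with hA
  set b : ℝ := lam.im with hB
  have hre : a ^ 2 - b ^ 2 - t * a + d = 0 := by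
    have := congrArg Complex.re heq
    simpa [pow_two, Complex.mul_re, Complex.mul_im] using this
  have him : 2 * a * b - t * b = 0 := by
    have := congrArg Complex.im heq
    simp [pow_two, Complex.mul_re, Complex.mul_im] at this
    linarith
  by_contra hcon
  push_neg at hcon
  rcases eq_or_ne b 0 with hb0 | hb0
  · rw [hb0] at hre
    nlinarith
  · have h2a : 2 * a = t := by
      have hf : (2 * a) * b = t * b := by linarith
      exact mul_right_cancel₀ hb0 hf
    nlinarith
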